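/- For D_i > 4D_g ≥ 0, the function u ↦ D(u)(1-u) with D(u) = D_i(1-4u+3u²)+D_g(4u-3u²) is strictly decreasing on [0, α], where α is the smaller root of D in (0,1); consequently sup_{u∈(0,α)} D(u)(1-u) = D(0) = D_i. -/

import Mathlib

theorem D_times_one_sub_decreasing (Di Dg : ℝ) (hDg : 0 ≤ Dg) (h : Di > 4 * Dg)
    (D : ℝ → ℝ)
    (hD : ∀ u, D u = Di * (1 - 4 * u + 3 * u ^ 2) + Dg * (4 * u - 3 * u ^ 2))
    (α : ℝ)
    (hα : α = 2 / 3 - Real.sqrt (Di ^ 2 + 4 * Dg ^ 2 - 5 * Di * Dg) / (3 * (Di - Dg))) :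
    StrictAntiOn (fun u => D u * (1 - u)) (Set.Icc 0 α) ∧
    sSup ((fun u => D u * (1 - u)) '' Set.Ioo 0 α) = Di := by
  have hc : (0:ℝ) < Di - Dg := by nlinarith
  set s := Real.sqrt (Di ^ 2 + 4 * Dg ^ 2 - 5 * Di * Dg) with hsdef
  have hdn : (0:ℝ) ≤ Di ^ 2 + 4 * Dg ^ 2 - 5 * Di * Dg := by nlinarith
  have hs2 : s ^ 2 = Di ^ 2 + 4 * Dg ^ 2 - 5 * Di * Dg := Real.sq_sqrt hdn
  have hsnn : 0 ≤ s := Real.sqrt_nonneg _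
  have hspos : 0 < s := by
    apply Real.sqrt_pos.mpr; nlinarith
  have hsle : s ≤ Di - Dg := by nlinarith
  -- s = (2 - 3α)(Di - Dg)
  have hseq : s = (2 - 3 * α) * (Di - Dg) := by
    rw [hα]; field_simp; ring
  have hα2 : α < 2 / 3 := by nlinarith
  have hα1 : 1 / 3 ≤ α := by nlinarith
  have hα0 : 0 < α := by linarith
  -- key: (2 - 3α)² (Di - Dg) = Di - 4Dg
  have hkey : (2 - 3 * α) ^ 2 * (Di - Dg) = Di - 4 * Dg := by
    have : ((2 - 3 * α) ^ 2 * (Di - Dg)) * (Di - Dg) = (Di - 4 * Dg) * (Di - Dg) := by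
      have := hs2
      rw [hseq] at this
      nlinarith [this]
    exact mul_right_cancel₀ (ne_of_gt hc) this
  -- D nonneg on [0, α]
  have hDnn : ∀ u : ℝ, 0 ≤ u → u ≤ α → 0 ≤ Di * (1 - 4 * u + 3 * u ^ 2) + Dg * (4 * u - 3 * u ^ 2) := by
    intro u hu0 huα
    have h1 : (2 - 3 * α) ≤ (2 - 3 * u) := by linarith
    have h2 : (2 - 3 * α) ^ 2 ≤ (2 - 3 * u) ^ 2 := by nlinarith
    nlinarith [mul_le_mul_of_nonneg_right h2 hc.le]
  -- replace f by polynomial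
  have hfg : (fun u => D u * (1 - u)) =
      fun u : ℝ => Di + (4 * Dg - 5 * Di) * u + 7 * (Di - Dg) * u ^ 2 - 3 * (Di - Dg) * u ^ 3 := by
    funext u; rw [hD]; ring
  rw [hfg]
  set g : ℝ → ℝ := fun u => Di + (4 * Dg - 5 * Di) * u + 7 * (Di - Dg) * u ^ 2 - 3 * (Di - Dg) * u ^ 3 with hg
  have hcontg : Continuous g := by fun_prop
  have hder : ∀ x : ℝ, HasDerivAt g ((4 * Dg - 5 * Di) + 7 * (Di - Dg) * (2 * x) - 3 * (Di - Dg) * (3 * x ^ 2)) x := by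
    intro x
    have h1 : HasDerivAt (fun u : ℝ => u) 1 x := hasDerivAt_id x
    have h2 : HasDerivAt (fun u : ℝ => u ^ 2) (2 * x) x := by
      simpa using hasDerivAt_pow 2 x
    have h3 : HasDerivAt (fun u : ℝ => u ^ 3) (3 * x ^ 2) x := by
      simpa using hasDerivAt_pow 3 x
    have := (((hasDerivAt_const x Di).add ((h1.const_mul (4 * Dg - 5 * Di)))).add
      (h2.const_mul (7 * (Di - Dg)))).sub (h3.const_mul (3 * (Di - Dg)))
    exact (this.congr_deriv (by ring)).congr_of_eventuallyEq
      (Filter.Eventually.of_forall fun u => by simp [hg])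
  have hanti : StrictAntiOn g (Set.Icc 0 α) := by
    apply strictAntiOn_of_deriv_neg (convex_Icc 0 α) hcontg.continuousOn
    intro x hx
    rw [interior_Icc] at hx
    rw [(hder x).deriv]
    have hDx := hDnn x hx.1.le hx.2.le
    have hp : 0 < (Di - Dg) * ((2 - 3 * x) * (1 - x)) := by
      apply mul_pos hc
      apply mul_pos <;> nlinarith [hx.1, hx.2]
    nlinarith [hDx, hp]
  refine ⟨hanti, ?_⟩
  have hg0 : g 0 = Di := by simp [hg]
  apply csSup_eq_of_forall_le_of_forall_lt_exists_gt
  · exact (Set.nonempty_Ioo.mpr hα0).image g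
  · rintro a ⟨u, hu, rfl⟩
    have := hanti (Set.left_mem_Icc.mpr hα0.le) ⟨hu.1.le, hu.2.le⟩ hu.1
    rw [hg0] at this
    exact this.le
  · intro w hw
    have htend : Filter.Tendsto g (nhdsWithin 0 (Set.Ioi 0)) (nhds Di) := by
      rw [← hg0]
      exact (hcontg.tendsto 0).mono_left nhdsWithin_le_nhds
    have hev1 : ∀ᶠ u in nhdsWithin 0 (Set.Ioi 0), w < g u :=
      htend.eventually (eventually_gt_nhds hw)
    have hev2 : ∀ᶠ u in nhdsWithin 0 (Set.Ioi 0), u ∈ Set.Ioo 0 α :=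
      Ioo_mem_nhdsGT hα0
    obtain ⟨u, hu1, hu2⟩ := (hev1.and hev2).exists
    exact ⟨g u, Set.mem_image_of_mem g hu2, hu1⟩
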